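/- For a topological group G the following are equivalent: (1) every continuous action of G on a nonempty compact convex subset K of a Hausdorff locally convex real topological vector space in which each g ∈ G acts by an affine map has a fixed point; (2) every continuous action of G on a nonempty compact Hausdorff space admits an invariant regular Borel probability measure. -/

import Mathlib

open MeasureTheory TopologicalSpace Set
open scoped ENNReal NNReal
set_option linter.unusedSectionVars false
set_option linter.unusedVariables false
set_option maxHeartbeats 1000000



lemma cont_integrable {Y : Type*} [TopologicalSpace Y] [CompactSpace Y] [T2Space Y]
    [MeasurableSpace Y] [OpensMeasurableSpace Y] {μ : Measure Y} [IsFiniteMeasure μ]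
    {V : Type*} [NormedAddCommGroup V] {f : Y → V} (hf : Continuous f) : Integrable f μ := by
  rw [← integrableOn_univ]
  exact hf.continuousOn.integrableOn_compact isCompact_univ

lemma exists_barycenter {E : Type} [AddCommGroup E] [Module ℝ E] [TopologicalSpace E]
    [IsTopologicalAddGroup E] [ContinuousSMul ℝ E] [T2Space E]
    {K : Set E} (hK : IsCompact K) (hKconv : Convex ℝ K)
    [MeasurableSpace K] [BorelSpace K] (μ : Measure K) [IsProbabilityMeasure μ]
    (hne : K.Nonempty) :
    ∃ b : K, ∀ f : K → ℝ, Continuous f →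
      (∀ (x y : K) (t : ℝ), 0 ≤ t → t ≤ 1 →
        ∀ hm : t • (x : E) + (1 - t) • (y : E) ∈ K, f ⟨_, hm⟩ = t * f x + (1 - t) * f y) →
      f b = ∫ x, f x ∂μ := by
  classical
  haveI : CompactSpace K := isCompact_iff_compactSpace.mp hK
  haveI : Nonempty K := hne.to_subtype
  set P : (K → ℝ) → Prop := fun f => Continuous f ∧
      (∀ (x y : K) (t : ℝ), 0 ≤ t → t ≤ 1 →
        ∀ hm : t • (x : E) + (1 - t) • (y : E) ∈ K, f ⟨_, hm⟩ = t * f x + (1 - t) * f y)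
    with hP
  set F : {f : K → ℝ // P f} → Set K := fun f => {x | f.1 x = ∫ y, f.1 y ∂μ} with hF
  have hFcl : ∀ f, IsClosed (F f) := fun f => isClosed_eq f.2.1 continuous_const
  have key : ∀ s : Finset {f : K → ℝ // P f}, (⋂ f ∈ s, F f).Nonempty := by
    intro s
    set T : K → (s → ℝ) := fun x i => (i : {f : K → ℝ // P f}).1 x with hT
    have hTcont : Continuous T := continuous_pi fun i => i.1.2.1
    have hScpt : IsCompact (Set.range T) := isCompact_range hTcont
    have hSconv : Convex ℝ (Set.range T) := by
      rintro _ ⟨x, rfl⟩ _ ⟨y, rfl⟩ a b ha hb hab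
      have hb' : b = 1 - a := by linarith
      subst hb'
      have hm : a • (x : E) + (1 - a) • (y : E) ∈ K :=
        hKconv x.2 y.2 ha (by linarith) (by ring)
      refine ⟨⟨_, hm⟩, ?_⟩
      funext i
      have := i.1.2.2 x y a ha (by linarith) hm
      simp only [hT, Pi.add_apply, Pi.smul_apply, smul_eq_mul]
      rw [this]
    have hTint : Integrable T μ := cont_integrable hTcont
    set c : s → ℝ := fun i => ∫ x, i.1.1 x ∂μ with hcdef
    have hc : c = ∫ x, T x ∂μ := by
      funext i
      have h := (ContinuousLinearMap.proj (R := ℝ) (φ := fun _ : s => ℝ) i).integral_comp_comm hTint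
      simpa [hcdef, hT] using h
    have hmem : c ∈ Set.range T := by
      by_contra hcS
      obtain ⟨ℓ, u, hu1, hu2⟩ := geometric_hahn_banach_closed_point hSconv hScpt.isClosed hcS
      have h1 : ∀ x : K, ℓ (T x) < u := fun x => hu1 _ ⟨x, rfl⟩
      have h2 : ∫ x, ℓ (T x) ∂μ ≤ u := by
        calc ∫ x, ℓ (T x) ∂μ ≤ ∫ _x, u ∂μ :=
              integral_mono (cont_integrable (ℓ.continuous.comp hTcont)) (integrable_const u)
                (fun x => (h1 x).le)
          _ = u := by simp
      have h3 : ℓ c = ∫ x, ℓ (T x) ∂μ := by rw [hc, ℓ.integral_comp_comm hTint]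
      linarith
    obtain ⟨x, hx⟩ := hmem
    refine ⟨x, ?_⟩
    simp only [Set.mem_iInter]
    intro f hf
    exact congrFun hx ⟨f, hf⟩
  have hglob : (⋂ f, F f).Nonempty := by
    have h := IsCompact.nonempty_iInter_of_directed_nonempty_isCompact_isClosed
      (t := fun s : Finset {f : K → ℝ // P f} => ⋂ f ∈ s, F f)
      (fun s t => ⟨s ∪ t,
        Set.biInter_subset_biInter_left (fun f hf => Finset.mem_union_left _ hf),
        Set.biInter_subset_biInter_left (fun f hf => Finset.mem_union_right _ hf)⟩)
      key
      (fun s => (isClosed_biInter (fun f _ => hFcl f)).isCompact)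
      (fun s => isClosed_biInter (fun f _ => hFcl f))
    obtain ⟨b, hb⟩ := h
    refine ⟨b, Set.mem_iInter.mpr fun f => ?_⟩
    have := Set.mem_iInter.mp hb {f}
    simpa using this
  obtain ⟨b, hb⟩ := hglob
  exact ⟨b, fun f hfc hfa => Set.mem_iInter.mp hb ⟨f, hfc, hfa⟩⟩


variable {X : Type} [TopologicalSpace X] [CompactSpace X] [T2Space X]

/-- test set for the Riesz content -/
def testSet (φ : C(X, ℝ) → ℝ) (K : Set X) : Set ℝ :=
  {r | ∃ f : C(X, ℝ), (∀ x, 0 ≤ f x) ∧ (∀ x ∈ K, 1 ≤ f x) ∧ φ f = r}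

lemma testSet_nonempty (φ : C(X, ℝ) → ℝ) (K : Set X) : (testSet φ K).Nonempty :=
  ⟨φ 1, 1, fun x => by simp, fun x _ => by simp, rfl⟩

lemma testSet_bddBelow (φ : C(X, ℝ) → ℝ)
    (hpos : ∀ f : C(X, ℝ), (∀ x, 0 ≤ f x) → 0 ≤ φ f) (K : Set X) :
    BddBelow (testSet φ K) := by
  refine ⟨0, ?_⟩
  rintro r ⟨f, hf0, _, rfl⟩
  exact hpos f hf0

lemma sInf_testSet_nonneg (φ : C(X, ℝ) → ℝ)
    (hpos : ∀ f : C(X, ℝ), (∀ x, 0 ≤ f x) → 0 ≤ φ f) (K : Set X) :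
    0 ≤ sInf (testSet φ K) :=
  le_csInf (testSet_nonempty φ K) (by rintro r ⟨f, hf0, _, rfl⟩; exact hpos f hf0)

lemma sInf_testSet_le (φ : C(X, ℝ) → ℝ)
    (hpos : ∀ f : C(X, ℝ), (∀ x, 0 ≤ f x) → 0 ≤ φ f) {K : Set X} {f : C(X, ℝ)}
    (hf0 : ∀ x, 0 ≤ f x) (hf1 : ∀ x ∈ K, 1 ≤ f x) : sInf (testSet φ K) ≤ φ f :=
  csInf_le (testSet_bddBelow φ hpos K) ⟨f, hf0, hf1, rfl⟩

lemma testSet_anti (φ : C(X, ℝ) → ℝ) {K₁ K₂ : Set X} (h : K₁ ⊆ K₂) :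
    testSet φ K₂ ⊆ testSet φ K₁ := by
  rintro r ⟨f, hf0, hf1, rfl⟩
  exact ⟨f, hf0, fun x hx => hf1 x (h hx), rfl⟩

lemma sInf_testSet_sup_le (φ : C(X, ℝ) → ℝ)
    (hadd : ∀ f g, φ (f + g) = φ f + φ g)
    (hpos : ∀ f : C(X, ℝ), (∀ x, 0 ≤ f x) → 0 ≤ φ f) (K₁ K₂ : Compacts X) :
    sInf (testSet φ ((K₁ ⊔ K₂ : Compacts X) : Set X))
      ≤ sInf (testSet φ (K₁ : Set X)) + sInf (testSet φ (K₂ : Set X)) := by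
  apply le_of_forall_pos_le_add
  intro ε hε
  obtain ⟨r₁, ⟨f₁, hf₁0, hf₁1, rfl⟩, hr₁⟩ :=
    Real.lt_sInf_add_pos (testSet_nonempty φ (K₁ : Set X)) (half_pos hε)
  obtain ⟨r₂, ⟨f₂, hf₂0, hf₂1, rfl⟩, hr₂⟩ :=
    Real.lt_sInf_add_pos (testSet_nonempty φ (K₂ : Set X)) (half_pos hε)
  have htest : sInf (testSet φ ((K₁ ⊔ K₂ : Compacts X) : Set X)) ≤ φ (f₁ + f₂) := by
    refine sInf_testSet_le φ hpos (fun x => ?_) (fun x hx => ?_)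
    · simpa using add_nonneg (hf₁0 x) (hf₂0 x)
    · have hx' : x ∈ (K₁ : Set X) ∪ (K₂ : Set X) := hx
      simp only [ContinuousMap.add_apply]
      rcases hx' with hx' | hx'
      · exact le_add_of_le_of_nonneg (hf₁1 x hx') (hf₂0 x)
      · exact le_add_of_nonneg_of_le (hf₁0 x) (hf₂1 x hx')
  rw [hadd] at htest
  linarith

/-- The Riesz content associated to a positive normalized additive functional. -/
noncomputable def rieszCont (φ : C(X, ℝ) → ℝ)
    (hadd : ∀ f g, φ (f + g) = φ f + φ g)
    (hpos : ∀ f : C(X, ℝ), (∀ x, 0 ≤ f x) → 0 ≤ φ f) : Content X where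
  toFun := fun K => Real.toNNReal (sInf (testSet φ (K : Set X)))
  mono' := fun K₁ K₂ h =>
    Real.toNNReal_mono (csInf_le_csInf (testSet_bddBelow φ hpos _)
      (testSet_nonempty φ _) (testSet_anti φ h))
  sup_le' := fun K₁ K₂ => by
    calc Real.toNNReal (sInf (testSet φ ((K₁ ⊔ K₂ : Compacts X) : Set X)))
        ≤ Real.toNNReal (sInf (testSet φ (K₁ : Set X)) + sInf (testSet φ (K₂ : Set X))) :=
          Real.toNNReal_mono (sInf_testSet_sup_le φ hadd hpos K₁ K₂)
      _ = _ := Real.toNNReal_add (sInf_testSet_nonneg φ hpos _) (sInf_testSet_nonneg φ hpos _)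
  sup_disjoint' := by
    intro K₁ K₂ hdisj _ _
    have hge : sInf (testSet φ (K₁ : Set X)) + sInf (testSet φ (K₂ : Set X))
        ≤ sInf (testSet φ ((K₁ ⊔ K₂ : Compacts X) : Set X)) := by
      apply le_csInf (testSet_nonempty φ _)
      rintro r ⟨f, hf0, hf1, rfl⟩
      obtain ⟨χ, hχ0, hχ1, hχI⟩ :=
        exists_continuous_zero_one_of_isClosed K₂.2.isClosed K₁.2.isClosed hdisj.symm
      have e : f * χ + f * ((1 : C(X, ℝ)) - χ) = f := by
        ext x
        simp only [ContinuousMap.add_apply, ContinuousMap.mul_apply, ContinuousMap.sub_apply,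
          ContinuousMap.one_apply]
        ring
      have h1 : sInf (testSet φ (K₁ : Set X)) ≤ φ (f * χ) := by
        refine sInf_testSet_le φ hpos (fun x => ?_) (fun x hx => ?_)
        · exact mul_nonneg (hf0 x) (hχI x).1
        · have hm : x ∈ ((K₁ ⊔ K₂ : Compacts X) : Set X) := Or.inl hx
          simp only [ContinuousMap.mul_apply, hχ1 hx, Pi.one_apply, mul_one]
          exact hf1 x hm
      have h2 : sInf (testSet φ (K₂ : Set X)) ≤ φ (f * ((1 : C(X, ℝ)) - χ)) := by
        refine sInf_testSet_le φ hpos (fun x => ?_) (fun x hx => ?_)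
        · refine mul_nonneg (hf0 x) ?_
          simp only [ContinuousMap.sub_apply, ContinuousMap.one_apply]
          linarith [(hχI x).2]
        · have hm : x ∈ ((K₁ ⊔ K₂ : Compacts X) : Set X) := Or.inr hx
          simp only [ContinuousMap.mul_apply, ContinuousMap.sub_apply, ContinuousMap.one_apply,
            hχ0 hx, Pi.zero_apply, sub_zero, mul_one]
          exact hf1 x hm
      have hsum := hadd (f * χ) (f * ((1 : C(X, ℝ)) - χ))
      rw [e] at hsum
      linarith
    have heq := le_antisymm (sInf_testSet_sup_le φ hadd hpos K₁ K₂) hge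
    show (sInf (testSet φ ((K₁ ⊔ K₂ : Compacts X) : Set X))).toNNReal = _
    rw [heq, Real.toNNReal_add (sInf_testSet_nonneg φ hpos _) (sInf_testSet_nonneg φ hpos _)]

lemma exists_invariant_regular_prob [MeasurableSpace X] [BorelSpace X]
    (φ : C(X, ℝ) → ℝ)
    (hadd : ∀ f g, φ (f + g) = φ f + φ g)
    (hpos : ∀ f : C(X, ℝ), (∀ x, 0 ≤ f x) → 0 ≤ φ f)
    (hone : φ (1 : C(X, ℝ)) = 1) :
    ∃ μ : Measure X, IsProbabilityMeasure μ ∧ μ.Regular ∧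
      ∀ T : X ≃ₜ X, (∀ f : C(X, ℝ), φ (f.comp ⟨T, T.continuous⟩) = φ f) →
        (∀ f : C(X, ℝ), φ (f.comp ⟨T.symm, T.symm.continuous⟩) = φ f) →
        ∀ B : Set X, MeasurableSet B → μ (T ⁻¹' B) = μ B := by
  set C := rieszCont φ hadd hpos with hC
  refine ⟨C.measure, ⟨?_⟩, inferInstance, ?_⟩
  · -- total mass 1
    have hsinf : sInf (testSet φ (univ : Set X)) = 1 := by
      apply le_antisymm
      · have := sInf_testSet_le φ hpos (f := 1) (K := univ)
          (fun x => by simp) (fun x _ => by simp)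
        rwa [hone] at this
      · apply le_csInf (testSet_nonempty φ _)
        rintro r ⟨f, hf0, hf1, rfl⟩
        have hdecomp : f = 1 + (f - 1) := by ring
        have hge : 0 ≤ φ (f - 1) := by
          apply hpos
          intro x
          have := hf1 x (mem_univ x)
          simp only [ContinuousMap.sub_apply, ContinuousMap.one_apply]
          linarith
        calc (1 : ℝ) = φ 1 + 0 := by rw [hone, add_zero]
          _ ≤ φ 1 + φ (f - 1) := by linarith
          _ = φ (1 + (f - 1)) := (hadd _ _).symm
          _ = φ f := by rw [← hdecomp]
    have hK : C ⟨univ, isCompact_univ⟩ = (1 : ℝ≥0∞) := by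
      show ((C.toFun ⟨univ, isCompact_univ⟩ : ℝ≥0) : ℝ≥0∞) = 1
      have : C.toFun ⟨univ, isCompact_univ⟩ = 1 := by
        show (sInf (testSet φ ((⟨univ, isCompact_univ⟩ : Compacts X) : Set X))).toNNReal = 1
        rw [show ((⟨univ, isCompact_univ⟩ : Compacts X) : Set X) = (univ : Set X) from rfl,
          hsinf]
        simp
      rw [this]; simp
    have : C.measure univ = C.outerMeasure univ := C.measure_apply MeasurableSet.univ
    rw [this, C.outerMeasure_of_isOpen univ isOpen_univ]
    apply le_antisymm
    · refine iSup₂_le fun K _ => ?_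
      rw [← hK]
      exact C.mono K ⟨univ, isCompact_univ⟩ (subset_univ _)
    · rw [← hK]
      exact le_iSup₂ (f := fun (K : Compacts X) (_ : (K : Set X) ⊆ (univ : Set X)) => C K)
        (⟨univ, isCompact_univ⟩ : Compacts X) (subset_univ _)
  · -- invariance
    intro T hT hTs B hB
    have hmap : ∀ K : Compacts X, C (K.map T T.continuous) = C K := by
      intro K
      have hset : testSet φ (T '' (K : Set X)) = testSet φ (K : Set X) := by
        ext r
        constructor
        · rintro ⟨f, hf0, hf1, rfl⟩
          refine ⟨f.comp ⟨T, T.continuous⟩, fun x => hf0 (T x), fun x hx => ?_, hT f⟩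
          exact hf1 (T x) (mem_image_of_mem T hx)
        · rintro ⟨f, hf0, hf1, rfl⟩
          refine ⟨f.comp ⟨T.symm, T.symm.continuous⟩, fun x => hf0 (T.symm x),
            fun x hx => ?_, hTs f⟩
          obtain ⟨y, hy, rfl⟩ := hx
          simpa [Homeomorph.symm_apply_apply] using hf1 y hy
      show ((C.toFun _ : ℝ≥0) : ℝ≥0∞) = ((C.toFun _ : ℝ≥0) : ℝ≥0∞)
      congr 1
      show (sInf (testSet φ (T '' (K : Set X)))).toNNReal = (sInf (testSet φ (K : Set X))).toNNReal
      rw [hset]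
    rw [C.measure_apply (hB.preimage T.continuous.measurable), C.measure_apply hB]
    exact C.outerMeasure_preimage T hmap B


section WD
variable {X : Type} [TopologicalSpace X] [CompactSpace X] [T2Space X]

noncomputable def compRightCLM (ψ : C(X, X)) : C(X, ℝ) →L[ℝ] C(X, ℝ) :=
  LinearMap.mkContinuous
    { toFun := fun f => f.comp ψ
      map_add' := fun f g => rfl
      map_smul' := fun c f => rfl }
    1
    (fun f => by
      rw [one_mul]
      exact (ContinuousMap.norm_le _ (norm_nonneg f)).mpr fun x => f.norm_coe_le_norm (ψ x))

noncomputable def dualMap (ψ : C(X, X)) :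
    WeakDual ℝ C(X, ℝ) → WeakDual ℝ C(X, ℝ) :=
  fun φ => StrongDual.toWeakDual ((WeakDual.toStrongDual φ).comp (compRightCLM ψ))

lemma dualMap_apply (ψ : C(X, X)) (φ : WeakDual ℝ C(X, ℝ)) (f : C(X, ℝ)) :
    dualMap ψ φ f = φ (f.comp ψ) := rfl

lemma dualMap_continuous (ψ : C(X, X)) : Continuous (dualMap ψ) :=
  WeakDual.continuous_of_continuous_eval fun f =>
    WeakDual.eval_continuous (compRightCLM ψ f)

noncomputable def dualMapL (ψ : C(X, X)) :
    WeakDual ℝ C(X, ℝ) →ₗ[ℝ] WeakDual ℝ C(X, ℝ) where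
  toFun := dualMap ψ
  map_add' := fun a b => by
    apply DFunLike.ext
    intro f
    rfl
  map_smul' := fun c a => by
    apply DFunLike.ext
    intro f
    rfl

noncomputable def dirac' (x : X) : WeakDual ℝ C(X, ℝ) :=
  StrongDual.toWeakDual (ContinuousMap.evalCLM ℝ x)

lemma dirac'_apply (x : X) (f : C(X, ℝ)) : dirac' x f = f x := rfl

end WD

theorem forward_dir {G : Type} [Group G] [TopologicalSpace G] [IsTopologicalGroup G]
    (hfix : ∀ (E : Type) [AddCommGroup E] [Module ℝ E] [TopologicalSpace E]
        [IsTopologicalAddGroup E] [ContinuousSMul ℝ E] [T2Space E] [LocallyConvexSpace ℝ E]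
        (K : Set E), IsCompact K → ∀ hKconv : Convex ℝ K, K.Nonempty →
        ∀ act : G → K → K,
          (∀ x, act 1 x = x) →
          (∀ g h x, act (g * h) x = act g (act h x)) →
          (Continuous fun p : G × K => act p.1 p.2) →
          (∀ (g : G) (x y : K) (t : ℝ) (ht0 : 0 ≤ t) (ht1 : t ≤ 1),
            (act g ⟨t • (x : E) + (1 - t) • (y : E),
                hKconv x.2 y.2 ht0 (by linarith) (by ring)⟩ : E)
              = t • (act g x : E) + (1 - t) • (act g y : E)) →
          ∃ x : K, ∀ g : G, act g x = x)
    {X : Type} [TopologicalSpace X] [CompactSpace X] [T2Space X] [Nonempty X]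
    [MeasurableSpace X] [BorelSpace X]
    (act : G → X → X) (h1 : ∀ x, act 1 x = x)
    (hmul : ∀ g h x, act (g * h) x = act g (act h x))
    (hcont : Continuous fun p : G × X => act p.1 p.2) :
    ∃ μ : Measure X, IsProbabilityMeasure μ ∧ μ.Regular ∧
      ∀ (g : G) (B : Set X), MeasurableSet B → μ (act g ⁻¹' B) = μ B := by
  classical
  haveI hlcs : LocallyConvexSpace ℝ (WeakDual ℝ C(X, ℝ)) := WeakBilin.locallyConvexSpace
  have hactg : ∀ g : G, Continuous (act g) := fun g =>
    hcont.comp (continuous_const.prodMk continuous_id)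
  set actC : G → C(X, X) := fun g => ⟨act g, hactg g⟩ with hactC
  set T : G → WeakDual ℝ C(X, ℝ) → WeakDual ℝ C(X, ℝ) := fun g => dualMap (actC g) with hTdef
  set D : Set (WeakDual ℝ C(X, ℝ)) := Set.range dirac' with hD
  set Kset : Set (WeakDual ℝ C(X, ℝ)) := closure (convexHull ℝ D) with hKset
  set B : Set (WeakDual ℝ C(X, ℝ)) := ⇑WeakDual.toStrongDual ⁻¹' Metric.closedBall 0 1 with hB
  have hBcompact : IsCompact B := WeakDual.isCompact_closedBall (𝕜 := ℝ) 0 1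
  have hDB : D ⊆ B := by
    rintro _ ⟨x, rfl⟩
    show WeakDual.toStrongDual (dirac' x) ∈ Metric.closedBall 0 1
    rw [Metric.mem_closedBall]
    refine (dist_zero_right (WeakDual.toStrongDual (dirac' x))).le.trans ?_
    exact ContinuousLinearMap.opNorm_le_bound _ zero_le_one fun f => by
      rw [one_mul]; exact f.norm_coe_le_norm x
  have hBconv : Convex ℝ B :=
    (convex_closedBall (0 : StrongDual ℝ C(X, ℝ)) 1).linear_preimage
      WeakDual.toStrongDual.toLinearMap
  have hKB : Kset ⊆ B := closure_minimal (convexHull_min hDB hBconv) hBcompact.isClosed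
  have hKcpt : IsCompact Kset := hBcompact.of_isClosed_subset isClosed_closure hKB
  have hKconv : Convex ℝ Kset := (convex_convexHull ℝ D).closure
  obtain ⟨x₀⟩ := ‹Nonempty X›
  have hKne : Kset.Nonempty :=
    ⟨dirac' x₀, subset_closure (subset_convexHull ℝ D ⟨x₀, rfl⟩)⟩
  have hnorm : ∀ ψ ∈ Kset, ∀ f : C(X, ℝ), ‖ψ f‖ ≤ ‖f‖ := by
    intro ψ hψ f
    have hψB : ‖WeakDual.toStrongDual ψ‖ ≤ 1 := by
      have := hKB hψ
      rw [hB, Set.mem_preimage, Metric.mem_closedBall] at this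
      exact (dist_zero_right (WeakDual.toStrongDual ψ)).symm.le.trans this
    calc ‖ψ f‖ = ‖(WeakDual.toStrongDual ψ) f‖ := rfl
      _ ≤ ‖WeakDual.toStrongDual ψ‖ * ‖f‖ := ContinuousLinearMap.le_opNorm _ _
      _ ≤ 1 * ‖f‖ := mul_le_mul_of_nonneg_right hψB (norm_nonneg f)
      _ = ‖f‖ := one_mul _
  have hTδ : ∀ (g : G) (x : X), T g (dirac' x) = dirac' (act g x) := by
    intro g x
    apply DFunLike.ext
    intro f
    rfl
  have hTK : ∀ g : G, T g '' Kset ⊆ Kset := by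
    intro g
    have h1' : T g '' convexHull ℝ D ⊆ convexHull ℝ D := by
      have himg : T g '' convexHull ℝ D = convexHull ℝ (T g '' D) :=
        (dualMapL (actC g)).image_convexHull D
      rw [himg]
      apply convexHull_mono
      rintro _ ⟨_, ⟨x, rfl⟩, rfl⟩
      exact ⟨act g x, (hTδ g x).symm⟩
    calc T g '' Kset ⊆ closure (T g '' convexHull ℝ D) :=
          image_closure_subset_closure_image (dualMap_continuous _)
      _ ⊆ Kset := closure_mono h1'
  set actK : G → Kset → Kset := fun g k => ⟨T g k, hTK g (Set.mem_image_of_mem _ k.2)⟩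
    with hactK
  have h1K : ∀ k, actK 1 k = k := by
    intro k
    apply Subtype.ext
    apply DFunLike.ext
    intro f
    show (k : WeakDual ℝ C(X, ℝ)) (f.comp (actC 1)) = (k : WeakDual ℝ C(X, ℝ)) f
    exact congrArg _ (ContinuousMap.ext fun x => congrArg f (h1 x))
  have hmulK : ∀ g h k, actK (g * h) k = actK g (actK h k) := by
    intro g h k
    apply Subtype.ext
    apply DFunLike.ext
    intro f
    show (k : WeakDual ℝ C(X, ℝ)) (f.comp (actC (g * h)))
        = (k : WeakDual ℝ C(X, ℝ)) ((f.comp (actC g)).comp (actC h))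
    exact congrArg _ (ContinuousMap.ext fun x => congrArg f (hmul g h x))
  have hcontK : Continuous fun p : G × Kset => actK p.1 p.2 := by
    apply Continuous.subtype_mk
    apply WeakDual.continuous_of_continuous_eval
    intro f
    have hH : Continuous fun q : G × X => f (act q.1 q.2) := f.continuous.comp hcont
    set F : G → C(X, ℝ) := fun g => f.comp (actC g) with hF
    have hFcurry : F = ⇑(ContinuousMap.curry ⟨fun q : G × X => f (act q.1 q.2), hH⟩) :=
      funext fun g => ContinuousMap.ext fun x => rfl
    have hFcont : Continuous F := by
      rw [hFcurry]; exact (ContinuousMap.curry _).continuous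
    rw [continuous_iff_continuousAt]
    rintro ⟨g₀, ψ₀⟩
    have t1 : Filter.Tendsto (fun p : G × Kset => (p.2 : WeakDual ℝ C(X, ℝ)) (F p.1 - F g₀))
        (nhds (g₀, ψ₀)) (nhds 0) := by
      have hcn : Continuous fun p : G × Kset => ‖F p.1 - F g₀‖ :=
        ((hFcont.comp continuous_fst).sub continuous_const).norm
      have hten : Filter.Tendsto (fun p : G × Kset => ‖F p.1 - F g₀‖)
          (nhds (g₀, ψ₀)) (nhds 0) := by
        have := hcn.continuousAt (x := (g₀, ψ₀))
        simpa [ContinuousAt] using this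
      exact squeeze_zero_norm (fun p => hnorm p.2 p.2.2 (F p.1 - F g₀)) hten
    have t2 : Filter.Tendsto (fun p : G × Kset => (p.2 : WeakDual ℝ C(X, ℝ)) (F g₀))
        (nhds (g₀, ψ₀)) (nhds ((ψ₀ : WeakDual ℝ C(X, ℝ)) (F g₀))) :=
      ((WeakDual.eval_continuous (F g₀)).comp
        (continuous_subtype_val.comp continuous_snd)).continuousAt
    have hsum := t1.add t2
    rw [zero_add] at hsum
    have heq : ∀ p : G × Kset,
        (p.2 : WeakDual ℝ C(X, ℝ)) (F p.1 - F g₀) + (p.2 : WeakDual ℝ C(X, ℝ)) (F g₀)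
          = (T p.1 (p.2 : WeakDual ℝ C(X, ℝ))) f := by
      intro p
      rw [_root_.map_sub]
      show (p.2 : WeakDual ℝ C(X, ℝ)) (F p.1) - _ + _ = (p.2 : WeakDual ℝ C(X, ℝ)) (F p.1)
      ring
    exact hsum.congr heq
  have haffK : ∀ (g : G) (x y : Kset) (t : ℝ) (ht0 : 0 ≤ t) (ht1 : t ≤ 1),
      (actK g ⟨t • (x : WeakDual ℝ C(X, ℝ)) + (1 - t) • (y : WeakDual ℝ C(X, ℝ)),
          hKconv x.2 y.2 ht0 (by linarith) (by ring)⟩ : WeakDual ℝ C(X, ℝ))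
        = t • (actK g x : WeakDual ℝ C(X, ℝ)) + (1 - t) • (actK g y : WeakDual ℝ C(X, ℝ)) := by
    intro g x y t ht0 ht1
    show dualMapL (actC g) (t • (x : WeakDual ℝ C(X, ℝ)) + (1 - t) • (y : WeakDual ℝ C(X, ℝ)))
        = t • dualMapL (actC g) (x : WeakDual ℝ C(X, ℝ))
          + (1 - t) • dualMapL (actC g) (y : WeakDual ℝ C(X, ℝ))
    rw [_root_.map_add, _root_.map_smul, _root_.map_smul]
  obtain ⟨φK, hφfix⟩ := hfix (WeakDual ℝ C(X, ℝ)) Kset hKcpt hKconv hKne actK h1K hmulK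
    hcontK haffK
  set φ : WeakDual ℝ C(X, ℝ) := (φK : WeakDual ℝ C(X, ℝ)) with hφ
  have hφinv : ∀ (g : G) (f : C(X, ℝ)), φ (f.comp (actC g)) = φ f := by
    intro g f
    have h := congrArg Subtype.val (hφfix g)
    exact DFunLike.congr_fun h f
  -- positivity and normalization
  set S : Set (WeakDual ℝ C(X, ℝ)) :=
    {ψ | ψ (1 : C(X, ℝ)) = 1} ∩ ⋂ (f : C(X, ℝ)) (_ : ∀ x, 0 ≤ f x), {ψ | 0 ≤ ψ f} with hSdef
  have hSclosed : IsClosed S :=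
    (isClosed_eq (WeakDual.eval_continuous 1) continuous_const).inter
      (isClosed_iInter fun f => isClosed_iInter fun _ =>
        isClosed_le continuous_const (WeakDual.eval_continuous f))
  have hSconv : Convex ℝ S := by
    rintro a ⟨ha1, ha2⟩ b ⟨hb1, hb2⟩ ta tb hta htb htab
    simp only [Set.mem_iInter, Set.mem_setOf_eq] at ha2 hb2
    constructor
    · show (ta • a + tb • b) (1 : C(X, ℝ)) = 1
      have : (ta • a + tb • b) (1 : C(X, ℝ)) = ta * a 1 + tb * b 1 := rfl
      rw [this, ha1, hb1]
      simpa using htab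
    · simp only [Set.mem_iInter, Set.mem_setOf_eq]
      intro f hf
      have : (ta • a + tb • b) f = ta * a f + tb * b f := rfl
      rw [this]
      have h1 := ha2 f hf
      have h2 := hb2 f hf
      positivity
  have hDS : D ⊆ S := by
    rintro _ ⟨x, rfl⟩
    constructor
    · show (1 : C(X, ℝ)) x = 1
      simp
    · simp only [Set.mem_iInter, Set.mem_setOf_eq]
      intro f hf
      exact hf x
  have hφS : φ ∈ S := closure_minimal (convexHull_min hDS hSconv) hSclosed φK.2
  have hφ1 : φ (1 : C(X, ℝ)) = 1 := hφS.1
  have hφpos : ∀ f : C(X, ℝ), (∀ x, 0 ≤ f x) → 0 ≤ φ f := by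
    have := hφS.2
    simp only [Set.mem_iInter, Set.mem_setOf_eq] at this
    exact this
  obtain ⟨μ, hμp, hμreg, hμinv⟩ := exists_invariant_regular_prob
    (fun f => φ f) (fun f g => map_add φ f g) hφpos hφ1
  refine ⟨μ, hμp, hμreg, ?_⟩
  intro g Bset hB
  set Thom : X ≃ₜ X :=
    { toFun := act g
      invFun := act g⁻¹
      left_inv := fun x => by rw [← hmul, inv_mul_cancel, h1]
      right_inv := fun x => by rw [← hmul, mul_inv_cancel, h1]
      continuous_toFun := hactg g
      continuous_invFun := hactg g⁻¹ } with hThom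
  have := hμinv Thom (fun f => hφinv g f) (fun f => hφinv g⁻¹ f) Bset hB
  exact this

theorem backward_dir {G : Type} [Group G] [TopologicalSpace G] [IsTopologicalGroup G]
    (hmeas : ∀ (X : Type) [TopologicalSpace X] [CompactSpace X] [T2Space X] [Nonempty X]
        [MeasurableSpace X] [BorelSpace X],
        ∀ act : G → X → X,
          (∀ x, act 1 x = x) →
          (∀ g h x, act (g * h) x = act g (act h x)) →
          (Continuous fun p : G × X => act p.1 p.2) →
          ∃ μ : Measure X, IsProbabilityMeasure μ ∧ μ.Regular ∧
            ∀ (g : G) (B : Set X), MeasurableSet B → μ (act g ⁻¹' B) = μ B) :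
    (∀ (E : Type) [AddCommGroup E] [Module ℝ E] [TopologicalSpace E]
        [IsTopologicalAddGroup E] [ContinuousSMul ℝ E] [T2Space E] [LocallyConvexSpace ℝ E]
        (K : Set E), IsCompact K → ∀ hKconv : Convex ℝ K, K.Nonempty →
        ∀ act : G → K → K,
          (∀ x, act 1 x = x) →
          (∀ g h x, act (g * h) x = act g (act h x)) →
          (Continuous fun p : G × K => act p.1 p.2) →
          (∀ (g : G) (x y : K) (t : ℝ) (ht0 : 0 ≤ t) (ht1 : t ≤ 1),
            (act g ⟨t • (x : E) + (1 - t) • (y : E),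
                hKconv x.2 y.2 ht0 (by linarith) (by ring)⟩ : E)
              = t • (act g x : E) + (1 - t) • (act g y : E)) →
          ∃ x : K, ∀ g : G, act g x = x) := by
  intro E _ _ _ _ _ _ _ K hK hKconv hne act h1 hmul hcont haff
  haveI : CompactSpace K := isCompact_iff_compactSpace.mp hK
  haveI : Nonempty K := hne.to_subtype
  letI : MeasurableSpace K := borel K
  haveI : BorelSpace K := ⟨rfl⟩
  obtain ⟨μ, hμp, hμreg, hμinv⟩ := hmeas K act h1 hmul hcont
  haveI := hμp
  -- continuity of each act g
  have hactg : ∀ g : G, Continuous (act g) := fun g =>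
    hcont.comp (continuous_const.prodMk continuous_id)
  -- map (act g) μ = μ
  have hmap : ∀ g : G, μ.map (act g) = μ := by
    intro g
    ext B hB
    rw [Measure.map_apply (hactg g).measurable hB]
    exact hμinv g B hB
  obtain ⟨b, hb⟩ := exists_barycenter hK hKconv μ hne
  refine ⟨b, fun g => ?_⟩
  by_contra hneq
  obtain ⟨ℓ, hℓ⟩ := SeparatingDual.exists_separating_of_ne (R := ℝ)
    (Subtype.coe_ne_coe.mpr hneq)
  apply hℓ
  have haff1 : ∀ (x y : K) (t : ℝ), 0 ≤ t → t ≤ 1 →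
      ∀ hm : t • (x : E) + (1 - t) • (y : E) ∈ K,
      (fun z : K => ℓ (act g z)) ⟨_, hm⟩ = t * ℓ (act g x) + (1 - t) * ℓ (act g y) := by
    intro x y t ht0 ht1 hm
    have h' : ((act g ⟨t • (x : E) + (1 - t) • (y : E), hm⟩ : K) : E)
        = t • (act g x : E) + (1 - t) • (act g y : E) := haff g x y t ht0 ht1
    simp only []
    rw [h', ℓ.map_add, ℓ.map_smul, ℓ.map_smul, smul_eq_mul, smul_eq_mul]
  have haff2 : ∀ (x y : K) (t : ℝ), 0 ≤ t → t ≤ 1 →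
      ∀ hm : t • (x : E) + (1 - t) • (y : E) ∈ K,
      (fun z : K => ℓ (z : E)) ⟨_, hm⟩ = t * ℓ (x : E) + (1 - t) * ℓ (y : E) := by
    intro x y t ht0 ht1 hm
    show ℓ (t • (x : E) + (1 - t) • (y : E)) = _
    rw [ℓ.map_add, ℓ.map_smul, ℓ.map_smul, smul_eq_mul, smul_eq_mul]
  have e1 : ℓ (act g b : E) = ∫ x, ℓ (act g x : E) ∂μ :=
    hb _ (ℓ.continuous.comp (continuous_subtype_val.comp (hactg g))) haff1
  have e2 : ℓ (b : E) = ∫ x, ℓ (x : E) ∂μ :=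
    hb _ (ℓ.continuous.comp continuous_subtype_val) haff2
  have hast : AEStronglyMeasurable (fun z : K => ℓ (z : E)) (μ.map (act g)) := by
    rw [hmap g]; exact (ℓ.continuous.comp continuous_subtype_val).aestronglyMeasurable
  have e3 := integral_map (hactg g).aemeasurable hast
  rw [hmap g] at e3
  rw [e1, e2, ← e3]


/-- For a topological group `G`, the fixed-point property for continuous affine
actions on nonempty compact convex subsets of Hausdorff locally convex real topological vector
spaces is equivalent to the existence of an invariant regular Borel probability measure for
every continuous action of `G` on a nonempty compact Hausdorff space. -/
theorem stmt_1 (G : Type) [Group G] [TopologicalSpace G] [IsTopologicalGroup G] :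
    (∀ (E : Type) [AddCommGroup E] [Module ℝ E] [TopologicalSpace E]
        [IsTopologicalAddGroup E] [ContinuousSMul ℝ E] [T2Space E] [LocallyConvexSpace ℝ E]
        (K : Set E), IsCompact K → ∀ hKconv : Convex ℝ K, K.Nonempty →
        ∀ act : G → K → K,
          (∀ x, act 1 x = x) →
          (∀ g h x, act (g * h) x = act g (act h x)) →
          (Continuous fun p : G × K => act p.1 p.2) →
          (∀ (g : G) (x y : K) (t : ℝ) (ht0 : 0 ≤ t) (ht1 : t ≤ 1),
            (act g ⟨t • (x : E) + (1 - t) • (y : E),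
                hKconv x.2 y.2 ht0 (by linarith) (by ring)⟩ : E)
              = t • (act g x : E) + (1 - t) • (act g y : E)) →
          ∃ x : K, ∀ g : G, act g x = x) ↔
    (∀ (X : Type) [TopologicalSpace X] [CompactSpace X] [T2Space X] [Nonempty X]
        [MeasurableSpace X] [BorelSpace X],
        ∀ act : G → X → X,
          (∀ x, act 1 x = x) →
          (∀ g h x, act (g * h) x = act g (act h x)) →
          (Continuous fun p : G × X => act p.1 p.2) →
          ∃ μ : Measure X, IsProbabilityMeasure μ ∧ μ.Regular ∧
            ∀ (g : G) (B : Set X), MeasurableSet B → μ (act g ⁻¹' B) = μ B) := by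
  constructor
  · intro hfix X _ _ _ _ _ _ act h1 hmul hcont
    exact forward_dir hfix act h1 hmul hcont
  · intro hmeas
    exact backward_dir hmeas
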